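/- Let B be a finite group, let A be a subgroup of B, let α be an automorphism of A, and let β be an automorphism of B with β(A) = A such that α(β(x)) = β(α(x)) for all x ∈ A. Then there exist a finite group C, an injective group homomorphism e : B → C, and elements f, g ∈ C satisfying: (i) f g = g f; (ii) f · e(x) · f⁻¹ = e(α(x)) for all x ∈ A; (iii) g · e(y) · g⁻¹ = e(β(y)) for all y ∈ B. -/

import Mathlib

open QuotientGroup in
theorem aux_perm (G : Type) [Group G] (H : Subgroup G) (γ : H ≃* H) :
    ∃ f : Equiv.Perm G, ∀ (c : G) (x : H), f (c * (x : G)) = f c * (γ x : G) := by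
  classical
  have mem : ∀ c : G, ((mk c : G ⧸ H).out)⁻¹ * c ∈ H := fun c =>
    QuotientGroup.eq.mp (QuotientGroup.out_eq' (mk c))
  have hmkmul : ∀ (c : G) (x : H), (mk (c * (x : G)) : G ⧸ H) = mk c := by
    intro c x
    rw [QuotientGroup.eq, mul_inv_rev, inv_mul_cancel_right]
    exact H.inv_mem x.2
  let E : G ≃ (G ⧸ H) × H :=
    { toFun := fun c => (mk c, ⟨_, mem c⟩)
      invFun := fun p => p.1.out * (p.2 : G)
      left_inv := fun c => by simp
      right_inv := fun p => by
        have h1 : (mk (p.1.out * (p.2 : G)) : G ⧸ H) = p.1 := by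
          rw [hmkmul, QuotientGroup.out_eq']
        refine Prod.ext h1 (Subtype.ext ?_)
        simp only
        rw [h1, inv_mul_cancel_left] }
  have hE : ∀ (c : G) (x : H), E (c * (x : G)) = ((E c).1, (E c).2 * x) := by
    intro c x
    refine Prod.ext (hmkmul c x) (Subtype.ext ?_)
    show ((mk (c * (x : G)) : G ⧸ H).out)⁻¹ * (c * x) = ((mk c : G ⧸ H).out⁻¹ * c) * x
    rw [hmkmul c x, mul_assoc]
  refine ⟨E.trans ((Equiv.refl (G ⧸ H)).prodCongr γ.toEquiv) |>.trans E.symm, fun c x => ?_⟩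
  show E.symm ((Equiv.refl (G ⧸ H)).prodCongr γ.toEquiv (E (c * x))) =
    E.symm ((Equiv.refl (G ⧸ H)).prodCongr γ.toEquiv (E c)) * (γ x : G)
  rw [hE]
  show ((E c).1).out * (γ ((E c).2 * x) : G) = ((E c).1).out * (γ (E c).2 : G) * (γ x : G)
  rw [map_mul, Submonoid.coe_mul, mul_assoc]

theorem commuting_realization_of_commuting_automorphisms
    (B : Type) [Group B] [Finite B] (A : Subgroup B)
    (α : MulAut A) (β : MulAut B)
    (hβA : Subgroup.map β.toMonoidHom A = A)
    (hcomm : ∀ x : A, ∀ hx : β (x : B) ∈ A, (α ⟨β (x : B), hx⟩ : B) = β (α x)) :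
    ∃ (C : Type) (_ : Group C) (_ : Finite C) (e : B →* C) (f g : C),
      f * g = g * f ∧
      (∀ x : A, f * e (x : B) * f⁻¹ = e (α x)) ∧
      (∀ y : B, g * e y * g⁻¹ = e (β y)) ∧
      Function.Injective e := by
  classical
  -- restriction of β to A
  let β' : A ≃* A := ((β : B ≃* B).subgroupMap A).trans (MulEquiv.subgroupCongr hβA)
  have hβ' : ∀ a : A, (β' a : B) = β (a : B) := fun a => rfl
  have hβ'mem : ∀ a : A, β (a : B) ∈ A := fun a => by rw [← hβ' a]; exact (β' a).2
  have hαβ' : ∀ a : A, α (β' a) = β' (α a) := by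
    intro a
    refine Subtype.ext ?_
    have h1 : β' a = ⟨β (a : B), hβ'mem a⟩ := Subtype.ext (hβ' a)
    rw [h1]
    rw [hcomm a (hβ'mem a), hβ']
  have hczp : ∀ n : ℤ, ∀ a : A, α ((β' ^ n) a) = (β' ^ n) (α a) := by
    intro n a
    have h : Commute α (β' : MulAut A) := by
      ext b
      exact congrArg Subtype.val (hαβ' b)
    have h2 := (h.zpow_right n)
    calc α ((β' ^ n) a) = (α * β' ^ n) a := rfl
      _ = (β' ^ n * α) a := by rw [h2]
      _ = (β' ^ n) (α a) := rfl
  have hzpow : ∀ n : ℤ, ∀ a : A, (β ^ n) (a : B) = ((β' ^ n) a : B) := by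
    intro n
    induction n using Int.induction_on with
    | zero => intro a; simp
    | succ k ih =>
      intro a
      have : (β ^ ((k : ℤ) + 1)) (a : B) = (β ^ (k : ℤ)) (β (a : B)) := by
        rw [zpow_add_one]
        rfl
      rw [this, ← hβ' a, ih (β' a)]
      congr 1
    | pred k ih =>
      intro a
      have hβinv : β⁻¹ (a : B) = (β'⁻¹ a : B) := by
        apply β.injective
        show β (β⁻¹ (a : B)) = β ((β'⁻¹ a : B))
        rw [← hβ' (β'⁻¹ a)]
        simp
      have : (β ^ (-(k : ℤ) - 1)) (a : B) = (β ^ (-(k : ℤ))) (β⁻¹ (a : B)) := by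
        rw [sub_eq_add_neg, zpow_add, zpow_neg_one]
        rfl
      rw [this, hβinv, ih (β'⁻¹ a)]
      congr 1
      rw [sub_eq_add_neg, zpow_add, zpow_neg_one]
      rfl
  -- consequences for members of zpowers β
  have hKA : ∀ k : MulAut B, k ∈ Subgroup.zpowers β → ∀ b : B, b ∈ A → k b ∈ A := by
    intro k hk b hb
    obtain ⟨n, hn⟩ := Subgroup.mem_zpowers_iff.mp hk
    rw [← hn, hzpow n ⟨b, hb⟩]
    exact ((β' ^ n) ⟨b, hb⟩).2
  have hKcomm : ∀ k : MulAut B, k ∈ Subgroup.zpowers β → ∀ a : A,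
      ∀ h : k (a : B) ∈ A, (α ⟨k (a : B), h⟩ : B) = k (α a : B) := by
    intro k hk a h
    obtain ⟨n, hn⟩ := Subgroup.mem_zpowers_iff.mp hk
    subst hn
    have h1 : (⟨(β ^ n) (a : B), h⟩ : A) = (β' ^ n) a := Subtype.ext (hzpow n a)
    rw [h1, hczp n a, ← hzpow n (α a)]
  -- the semidirect product
  let K : Subgroup (MulAut B) := Subgroup.zpowers β
  let G := SemidirectProduct B K K.subtype
  have : Finite G := Finite.of_equiv (B × K)
    (Equiv.mk (fun p : B × K => ⟨p.1, p.2⟩) (fun x => (x.left, x.right))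
      (fun p => rfl) (fun x => rfl))
  -- the subgroup A₁
  let A₁ : Subgroup G :=
    { carrier := {x : G | x.left ∈ A}
      one_mem' := A.one_mem
      mul_mem' := by
        intro x y hx hy
        show (x * y).left ∈ A
        rw [SemidirectProduct.mul_left]
        exact A.mul_mem hx (hKA _ x.right.2 _ hy)
      inv_mem' := by
        intro x hx
        show x⁻¹.left ∈ A
        rw [SemidirectProduct.inv_left]
        exact hKA _ (K.inv_mem x.right.2) _ (A.inv_mem hx) }
  have memA₁ : ∀ x : A₁, (x : G).left ∈ A := fun x => x.2
  -- the automorphism γ of A₁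
  let γ : A₁ ≃* A₁ :=
    { toFun := fun x => ⟨⟨(α ⟨(x : G).left, x.2⟩ : B), (x : G).right⟩,
        (α ⟨(x : G).left, x.2⟩).2⟩
      invFun := fun x => ⟨⟨(α.symm ⟨(x : G).left, x.2⟩ : B), (x : G).right⟩,
        (α.symm ⟨(x : G).left, x.2⟩).2⟩
      left_inv := by
        intro x
        refine Subtype.ext (SemidirectProduct.ext ?_ rfl)
        show (α.symm ⟨(α ⟨(x : G).left, x.2⟩ : B), _⟩ : B) = (x : G).left
        have : (⟨(α ⟨(x : G).left, x.2⟩ : B), (α ⟨(x : G).left, x.2⟩).2⟩ : A)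
            = α ⟨(x : G).left, x.2⟩ := rfl
        rw [this, MulEquiv.symm_apply_apply]
      right_inv := by
        intro x
        refine Subtype.ext (SemidirectProduct.ext ?_ rfl)
        show (α ⟨(α.symm ⟨(x : G).left, x.2⟩ : B), _⟩ : B) = (x : G).left
        have : (⟨(α.symm ⟨(x : G).left, x.2⟩ : B), (α.symm ⟨(x : G).left, x.2⟩).2⟩ : A)
            = α.symm ⟨(x : G).left, x.2⟩ := rfl
        rw [this, MulEquiv.apply_symm_apply]
      map_mul' := by
        intro x y
        refine Subtype.ext (SemidirectProduct.ext ?_ rfl)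
        show (α ⟨((x : G) * (y : G)).left, _⟩ : B)
          = (α ⟨(x : G).left, x.2⟩ : B) * (K.subtype (x : G).right)
            (α ⟨(y : G).left, y.2⟩ : B)
        have hky : ((x : G).right : MulAut B) (y : G).left ∈ A := hKA _ (x : G).right.2 _ y.2
        have h1 : (⟨((x : G) * (y : G)).left, (x * y).2⟩ : A)
            = ⟨(x : G).left, x.2⟩ * ⟨((x : G).right : MulAut B) (y : G).left, hky⟩ :=
          Subtype.ext rfl
        rw [h1, map_mul]
        have h2 : (α ⟨((x : G).right : MulAut B) ((y : G).left : B), hky⟩ : B)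
            = ((x : G).right : MulAut B) (α ⟨(y : G).left, y.2⟩ : B) :=
          hKcomm _ (x : G).right.2 ⟨(y : G).left, y.2⟩ hky
        rw [Submonoid.coe_mul, h2]
        rfl }
  obtain ⟨f, hf⟩ := aux_perm G A₁ γ
  -- the right regular representation
  let e₁ : G →* Equiv.Perm G := MonoidHom.mk' (fun y => Equiv.mulRight y⁻¹) (by
    intro y z
    apply Equiv.ext
    intro c
    rw [Equiv.Perm.mul_apply]
    simp [mul_assoc])
  have he₁ : ∀ (y : G) (c : G), e₁ y c = c * y⁻¹ := fun y c => rfl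
  have he₁inj : Function.Injective e₁ := by
    intro y z h
    have := congrArg (fun p : Equiv.Perm G => p 1) h
    simp only [he₁, one_mul] at this
    exact inv_injective this
  -- conjugation lemma
  have hconj : ∀ x : A₁, f * e₁ (x : G) * f⁻¹ = e₁ ((γ x : A₁) : G) := by
    intro x
    rw [mul_inv_eq_iff_eq_mul]
    apply Equiv.ext
    intro c
    rw [Equiv.Perm.mul_apply, Equiv.Perm.mul_apply]
    show f (e₁ (x : G) c) = e₁ ((γ x : A₁) : G) (f c)
    rw [he₁, he₁]
    have : (c * ((x : G))⁻¹) = c * ((x⁻¹ : A₁) : G) := rfl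
    rw [this, hf c x⁻¹, map_inv]
    rfl
  let βK : K := ⟨β, Subgroup.mem_zpowers β⟩
  let g₀ : G := SemidirectProduct.inr βK
  have hg₀ : g₀ ∈ A₁ := A.one_mem
  have hγg₀ : γ ⟨g₀, hg₀⟩ = ⟨g₀, hg₀⟩ := by
    refine Subtype.ext (SemidirectProduct.ext ?_ rfl)
    show (α ⟨g₀.left, hg₀⟩ : B) = g₀.left
    have h1 : (⟨g₀.left, hg₀⟩ : A) = 1 := Subtype.ext rfl
    rw [h1, map_one]
    rfl
  refine ⟨Equiv.Perm G, inferInstance, inferInstance,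
    e₁.comp SemidirectProduct.inl, f, e₁ g₀, ?_, ?_, ?_, ?_⟩
  · have := hconj ⟨g₀, hg₀⟩
    rw [hγg₀] at this
    rw [mul_inv_eq_iff_eq_mul] at this
    exact this
  · intro x
    have hmem : (SemidirectProduct.inl (x : B) : G) ∈ A₁ := x.2
    have := hconj ⟨SemidirectProduct.inl (x : B), hmem⟩
    have hγ : ((γ ⟨SemidirectProduct.inl (x : B), hmem⟩ : A₁) : G)
        = SemidirectProduct.inl ((α x : A) : B) := by
      refine SemidirectProduct.ext ?_ rfl
      show (α ⟨(SemidirectProduct.inl (x : B) : G).left, hmem⟩ : B) = (α x : B)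
      congr 1
    rw [hγ] at this
    exact this
  · intro y
    show e₁ g₀ * e₁ (SemidirectProduct.inl y) * (e₁ g₀)⁻¹
      = e₁ (SemidirectProduct.inl (β y))
    rw [← map_inv, ← map_mul, ← map_mul]
    congr 1
    show SemidirectProduct.inr βK * SemidirectProduct.inl y * (SemidirectProduct.inr βK)⁻¹
      = SemidirectProduct.inl (β y)
    rw [← map_inv, ← SemidirectProduct.inl_aut]
    rfl
  · exact he₁inj.comp SemidirectProduct.inl_injective
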